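/- Let n ≥ 4 and suppose S ∈ ℤ^{n+1} satisfies Q(S,S) = −(n+2), c₁(S) = −n, Q(S, D₂) = 0, Q(S, S₁) = 1, and Q(S, S_i) = 0 for all 2 ≤ i ≤ n−2, where S_i = E_{n−1−i} − E_{n−i} for 1 ≤ i ≤ n−3 and S_{n−2} = H − E₁ − E₂ − E_n. Then S = −2H + 3E₁ − E₂ − ⋯ − E_{n−2}. -/

import Mathlib

open Finset
open Fin.NatCast

/-- The class of the line `H` in `H₂(Xₙ;ℤ) ≅ ℤ^{n+1}` (coordinate `0`). -/
def Hv (n : ℕ) : Fin (n + 1) → ℤ := Pi.single 0 1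

/-- The exceptional class `E_j` in `H₂(Xₙ;ℤ) ≅ ℤ^{n+1}` (coordinate `j`, for `1 ≤ j ≤ n`). -/
def Ev (n : ℕ) (j : ℕ) : Fin (n + 1) → ℤ := Pi.single (j : Fin (n + 1)) 1

/-- The intersection form of `Xₙ = ℂP² # n ℂP²‾`. -/
def Qf (n : ℕ) (x y : Fin (n + 1) → ℤ) : ℤ :=
  x 0 * y 0 - ∑ j ∈ Finset.Icc 1 n, x (j : Fin (n + 1)) * y (j : Fin (n + 1))

/-- Pairing with the first Chern class: `c₁(x₀H + Σ x_j E_j) = 3x₀ + Σ x_j`. -/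
def c₁ (n : ℕ) (x : Fin (n + 1) → ℤ) : ℤ :=
  3 * x 0 + ∑ j ∈ Finset.Icc 1 n, x (j : Fin (n + 1))

/-- The class `D₂ = 3H - 2E₁ - Eₙ`. -/
def D₂ (n : ℕ) : Fin (n + 1) → ℤ := 3 • Hv n - 2 • Ev n 1 - Ev n n

/-- The `(-2)`-sphere classes of the chain:
`S_i = E_{n-1-i} - E_{n-i}` for `1 ≤ i ≤ n-3` and `S_{n-2} = H - E₁ - E₂ - Eₙ`. -/
def Sc (n : ℕ) (i : ℕ) : Fin (n + 1) → ℤ :=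
  if i = n - 2 then Hv n - Ev n 1 - Ev n 2 - Ev n n
  else Ev n (n - 1 - i) - Ev n (n - i)

lemma Ev_apply (n a : ℕ) (ha : a ≤ n) (k : Fin (n+1)) :
    Ev n a k = if (k : ℕ) = a then 1 else 0 := by
  rw [Ev, Pi.single_apply]
  congr 1
  simp only [eq_iff_iff]
  constructor
  · rintro rfl; exact Fin.val_cast_of_lt (by omega)
  · intro h; apply Fin.ext; rw [h, Fin.val_cast_of_lt (by omega)]

lemma Hv_apply (n : ℕ) (k : Fin (n+1)) :
    Hv n k = if (k : ℕ) = 0 then 1 else 0 := by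
  rw [Hv, Pi.single_apply]
  congr 1
  simp only [Fin.ext_iff, Fin.val_zero]

lemma QfEv (n : ℕ) (x : Fin (n+1) → ℤ) (m : ℕ) (h1 : 1 ≤ m) (h2 : m ≤ n) :
    Qf n x (Ev n m) = -x ↑m := by
  unfold Qf
  rw [Ev_apply n m h2 0]
  rw [Finset.sum_congr rfl (fun j hj => by
    rw [Ev_apply n m h2 ↑j, Fin.val_cast_of_lt (by simp at hj; omega), mul_ite, mul_one,
      mul_zero])]
  rw [Finset.sum_ite_eq' (Finset.Icc 1 n) m (fun j => x ↑j)]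
  rw [if_pos (show m ∈ Finset.Icc 1 n by simp; omega),
    if_neg (show ¬ ((0 : Fin (n+1)) : ℕ) = m by simp; omega)]
  ring

lemma QfHv (n : ℕ) (x : Fin (n+1) → ℤ) : Qf n x (Hv n) = x 0 := by
  unfold Qf
  rw [Hv_apply n 0]
  rw [Finset.sum_congr rfl (fun j hj => by
    rw [Hv_apply n ↑j, Fin.val_cast_of_lt (by simp at hj; omega),
      if_neg (by simp at hj; omega), mul_zero])]
  simp

lemma Qf_sub (n : ℕ) (x y z : Fin (n+1) → ℤ) : Qf n x (y - z) = Qf n x y - Qf n x z := by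
  unfold Qf; simp [mul_sub, Finset.sum_sub_distrib]; ring

lemma Qf_smul (n : ℕ) (c : ℤ) (x y : Fin (n+1) → ℤ) : Qf n x (c • y) = c * Qf n x y := by
  unfold Qf
  simp only [Pi.smul_apply, smul_eq_mul]
  rw [show ∑ j ∈ Finset.Icc 1 n, x ↑j * (c * y ↑j) = c * ∑ j ∈ Finset.Icc 1 n, x ↑j * y ↑j from by
    rw [Finset.mul_sum]; exact Finset.sum_congr rfl fun j _ => by ring]
  ring

lemma Qf_nsmul (n : ℕ) (c : ℕ) (x y : Fin (n+1) → ℤ) : Qf n x (c • y) = (c : ℤ) * Qf n x y := by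
  unfold Qf
  simp only [Pi.smul_apply, nsmul_eq_mul]
  rw [show ∑ j ∈ Finset.Icc 1 n, x ↑j * ((c : ℤ) * y ↑j)
      = (c : ℤ) * ∑ j ∈ Finset.Icc 1 n, x ↑j * y ↑j from by
    rw [Finset.mul_sum]; exact Finset.sum_congr rfl fun j _ => by ring]
  ring

/-- Determination of the `(-n-2)`-sphere class `S₀` of a `Cₙ`-configuration:
if `Q(S,S) = -(n+2)`, `c₁(S) = -n`, `S` is orthogonal to `D₂` and to `S₂, …, S_{n-2}`,
and meets `S₁` once, then `S = -2H + 3E₁ - E₂ - ⋯ - E_{n-2}`. -/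
theorem minus_n_plus_two_class (n : ℕ) (hn : 4 ≤ n) (S : Fin (n + 1) → ℤ)
    (hSS : Qf n S S = -((n : ℤ) + 2)) (hc : c₁ n S = -(n : ℤ))
    (hSD : Qf n S (D₂ n) = 0) (hS1 : Qf n S (Sc n 1) = 1)
    (hSi : ∀ i, 2 ≤ i → i ≤ n - 2 → Qf n S (Sc n i) = 0) :
    S = (-2 : ℤ) • Hv n + 3 • Ev n 1 - ∑ j ∈ Finset.Icc 2 (n - 2), Ev n j := by
  set N : ℤ := (n : ℤ) with hN
  have hN4 : (4 : ℤ) ≤ N := by rw [hN]; exact_mod_cast hn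
  -- linear equations from orthogonality
  rw [D₂, Qf_sub, Qf_sub, Qf_nsmul, Qf_nsmul, QfHv, QfEv n S 1 le_rfl (by omega),
    QfEv n S n (by omega) le_rfl] at hSD
  rw [Sc, if_neg (by omega), show n - 1 - 1 = n - 2 from by omega, Qf_sub,
    QfEv n S (n-2) (by omega) (by omega), QfEv n S (n-1) (by omega) (by omega)] at hS1
  have h4 := hSi (n-2) (by omega) le_rfl
  rw [Sc, if_pos rfl, Qf_sub, Qf_sub, Qf_sub, QfHv, QfEv n S 1 le_rfl (by omega),
    QfEv n S 2 (by omega) (by omega), QfEv n S n (by omega) le_rfl] at h4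
  -- chain spheres: S is constant on coordinates 2..n-2
  have hstep : ∀ k, 2 ≤ k → k ≤ n - 3 → S ↑(k+1) = S ↑k := by
    intro k hk1 hk2
    have hi := hSi (n - 1 - k) (by omega) (by omega)
    rw [Sc, if_neg (by omega), show n - 1 - (n - 1 - k) = k from by omega,
      show n - (n - 1 - k) = k + 1 from by omega, Qf_sub,
      QfEv n S k (by omega) (by omega), QfEv n S (k+1) (by omega) (by omega)] at hi
    linarith
  have hconst : ∀ j, 2 ≤ j → j ≤ n - 2 → S ↑j = S ↑(2:ℕ) := by
    intro j
    induction j with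
    | zero => omega
    | succ k ih =>
      intro h2 h3
      rcases Nat.lt_or_ge k 2 with hk | hk
      · have : k + 1 = 2 := by omega
        rw [this]
      · rw [hstep k hk (by omega), ih hk (by omega)]
  -- split the coordinate sums
  have hset : Finset.Icc 1 n = insert 1 (insert (n-1) (insert n (Finset.Icc 2 (n-2)))) := by
    ext j; simp only [Finset.mem_Icc, Finset.mem_insert]; omega
  have hsplit : ∀ f : ℕ → ℤ, ∑ j ∈ Finset.Icc 1 n, f j
      = f 1 + f (n-1) + f n + ∑ j ∈ Finset.Icc 2 (n-2), f j := by
    intro f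
    rw [hset, Finset.sum_insert (by simp; omega), Finset.sum_insert (by simp; omega),
      Finset.sum_insert (by simp; omega)]
    ring
  have hcard : ((Finset.Icc 2 (n-2)).card : ℤ) = N - 3 := by
    rw [Nat.card_Icc]; omega
  have hconstsum : ∀ g : ℤ → ℤ, ∑ j ∈ Finset.Icc 2 (n-2), g (S ↑j)
      = (N - 3) * g (S ↑(2:ℕ)) := by
    intro g
    rw [Finset.sum_congr rfl (fun j hj => by
      rw [hconst j (by simp at hj; omega) (by simp at hj; omega)]),
      Finset.sum_const, nsmul_eq_mul, hcard]
  unfold c₁ at hc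
  unfold Qf at hSS
  rw [hsplit (fun j => S ↑j)] at hc
  rw [hsplit (fun j => S ↑j * S ↑j)] at hSS
  rw [hconstsum (fun v => v)] at hc
  rw [hconstsum (fun v => v * v)] at hSS
  -- name the unknowns
  set a : ℤ := S 0 with ha0
  set b : ℤ := S ↑(1:ℕ) with hb0
  set t : ℤ := S ↑(2:ℕ) with ht0
  set u : ℤ := S ↑(n-1 : ℕ) with hu0
  set cc : ℤ := S ↑(n : ℕ) with hcc0
  have hS2 : S ↑(n-2 : ℕ) = t := hconst (n-2) (by omega) le_rfl
  rw [hS2] at hS1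
  -- solve the linear system
  push_cast at hSD
  have hu1 : u = t + 1 := by linarith
  have h2a : 2 * a = t - b := by linarith
  have hccv : cc = -a - b - t := by linarith
  have hbv : b = (N - 2) * t + N + 1 := by linarith
  -- the quadratic equation and its factorization
  have key : N * ((t + 1) * ((N - 1) * t + (N + 1))) = 0 := by
    linear_combination (-1) * hSS - (b + t) * h2a - (u + t + 1) * hu1
      - (cc - a - b - t) * hccv - (b + N * t + N + 1) * hbv
  have ht : t = -1 := by
    rcases mul_eq_zero.mp key with h | h
    · omega
    rcases mul_eq_zero.mp h with h | h
    · linarith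
    · exfalso
      have hdvd : (N - 1) ∣ 2 := ⟨-(t + 1), by linarith⟩
      have := Int.le_of_dvd (by norm_num) hdvd
      omega
  have hbv' : b = 3 := by rw [hbv, ht]; ring
  have hav : a = -2 := by omega
  have hccv' : cc = 0 := by rw [hccv, hav, hbv', ht]; ring
  have huv : u = 0 := by omega
  -- pointwise evaluation
  have hsum : ∀ k : Fin (n+1), (∑ j ∈ Finset.Icc 2 (n-2), Ev n j) k
      = if (k : ℕ) ∈ Finset.Icc 2 (n-2) then 1 else 0 := by
    intro k
    rw [Finset.sum_apply]
    rw [Finset.sum_congr rfl (fun j hj => Ev_apply n j (by simp at hj; omega) k)]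
    exact Finset.sum_ite_eq (Finset.Icc 2 (n-2)) (k : ℕ) (fun _ => (1:ℤ))
  funext k
  have hkval : ((k : ℕ) : Fin (n+1)) = k := by
    apply Fin.ext; rw [Fin.val_cast_of_lt k.isLt]
  rw [Pi.sub_apply, Pi.add_apply, Pi.smul_apply, Pi.smul_apply, smul_eq_mul, nsmul_eq_mul,
    hsum, Hv_apply, Ev_apply n 1 (by omega) k]
  simp only [Finset.mem_Icc]
  push_cast
  have hkeq : ∀ m : ℕ, (k : ℕ) = m → S k = S ↑m := by
    intro m hm; subst hm; rw [hkval]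
  rcases Nat.lt_or_ge (k : ℕ) 2 with hk2 | hk2
  · rcases Nat.lt_or_ge (k : ℕ) 1 with hk1 | hk1
    · have hk0 : (k : ℕ) = 0 := by omega
      rw [if_pos hk0, if_neg (by omega), if_neg (by omega), hkeq 0 hk0, Nat.cast_zero,
        ← ha0, hav]
      ring
    · have hk1' : (k : ℕ) = 1 := by omega
      rw [if_neg (by omega), if_pos hk1', if_neg (by omega), hkeq 1 hk1', ← hb0, hbv']
      ring
  · rcases Nat.lt_or_ge (n - 2) (k : ℕ) with hk3 | hk3
    · rcases Nat.lt_or_ge (k : ℕ) n with h | h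
      · rw [if_neg (by omega), if_neg (by omega), if_neg (by omega),
          hkeq (n-1) (by omega), ← hu0, huv]
        ring
      · rw [if_neg (by omega), if_neg (by omega), if_neg (by omega),
          hkeq n (by omega), ← hcc0, hccv']
        ring
    · rw [if_neg (by omega), if_neg (by omega), if_pos ⟨hk2, hk3⟩, hkeq (↑k) rfl,
        hconst (↑k) hk2 hk3, ht]
      ring
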